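/- Let d ≥ 1, p > 1, c ≥ 0, r > 0 and q̃ ∈ ℝ^d with q̃ ≠ 0. Then the strictly convex function q ↦ (1/p)(‖q‖ − c)₊^p + (r/2)‖q − q̃‖² on ℝ^d has a unique minimizer q*, and q* = λ q̃ where λ is the unique nonnegative real number satisfying (λ‖q̃‖ − c)₊^{p−1} + r λ‖q̃‖ − r‖q̃‖ = 0; moreover λ ∈ (0, 1]. -/

import Mathlib

open Real Set

private lemma rpow_grad_ineq {p : ℝ} (hp : 1 < p) {x y : ℝ} (hx : 0 ≤ x) (hy : 0 ≤ y) :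
    y ^ (p - 1) * (x - y) ≤ x ^ p / p - y ^ p / p := by
  rcases eq_or_lt_of_le hy with h0 | hy0
  · rw [← h0, Real.zero_rpow (by linarith : p - 1 ≠ (0:ℝ)),
      Real.zero_rpow (by linarith : p ≠ (0:ℝ))]
    simp only [zero_mul, zero_div, sub_zero]
    positivity
  · have hpq : p.HolderConjugate (p / (p - 1)) := Real.HolderConjugate.conjExponent hp
    have hyoung := Real.young_inequality_of_nonneg hx (Real.rpow_nonneg hy (p - 1)) hpq
    have h1 : (y ^ (p - 1)) ^ (p / (p - 1)) = y ^ p := by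
      rw [← Real.rpow_mul hy]
      congr 1
      field_simp
      exact div_self (by linarith : p - 1 ≠ (0:ℝ))
    have h2 : y ^ (p - 1) * y = y ^ p := by
      rw [← Real.rpow_add_one hy0.ne' (p - 1), sub_add_cancel]
    rw [h1] at hyoung
    have hq : y ^ p / (p / (p - 1)) = y ^ p - y ^ p / p := by
      field_simp
    have hexp : y ^ (p - 1) * (x - y) = x * y ^ (p - 1) - y ^ (p - 1) * y := by ring
    rw [hexp, h2]
    linarith

private lemma one_dim_min {p : ℝ} (hp : 1 < p) {c : ℝ} (hc : 0 ≤ c) {r : ℝ} (hr : 0 < r)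
    {t : ℝ} (ht : 0 < t) {lam : ℝ} (hl0 : 0 ≤ lam)
    (hroot : (max (lam * t - c) 0) ^ (p - 1) + r * lam * t - r * t = 0) (s : ℝ) :
    1 / p * (max (lam * t - c) 0) ^ p + r / 2 * (lam * t - t) ^ 2 ≤
      1 / p * (max (s - c) 0) ^ p + r / 2 * (s - t) ^ 2 := by
  set a := lam * t with ha
  set X := max (s - c) 0 with hX
  set Y := max (a - c) 0 with hY
  have hX0 : 0 ≤ X := le_max_right _ _
  have hY0 : 0 ≤ Y := le_max_right _ _
  have hgrad := rpow_grad_ineq hp hX0 hY0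
  have hYp : 0 ≤ Y ^ (p - 1) := Real.rpow_nonneg hY0 _
  have key2 : Y ^ (p - 1) * (s - a) ≤ X ^ p / p - Y ^ p / p := by
    rcases le_or_gt c a with hca | hca
    · have hYe : Y = a - c := max_eq_left (by linarith)
      have hXsc : s - c ≤ X := le_max_left _ _
      have hsa : s - a ≤ X - Y := by rw [hYe]; linarith
      exact (mul_le_mul_of_nonneg_left hsa hYp).trans hgrad
    · have hYe : Y = 0 := max_eq_right (by linarith)
      rw [hYe, Real.zero_rpow (by linarith : p - 1 ≠ (0:ℝ)),
        Real.zero_rpow (by linarith : p ≠ (0:ℝ))]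
      simp only [zero_mul, zero_div, sub_zero]
      positivity
  have hroot' : Y ^ (p - 1) = r * t - r * a := by
    have hra : r * lam * t = r * a := by rw [ha]; ring
    linarith [hroot, hra]
  have key3 : (r * t - r * a) * (s - a) ≤ X ^ p / p - Y ^ p / p := hroot' ▸ key2
  have hsq : 0 ≤ r / 2 * (s - a) ^ 2 := by positivity
  have hp0 : (0:ℝ) < p := by linarith
  have hdiv : X ^ p / p = 1 / p * X ^ p := by ring
  have hdiv' : Y ^ p / p = 1 / p * Y ^ p := by ring
  nlinarith [key3, hsq]

private lemma root_exists {p : ℝ} (hp : 1 < p) {c : ℝ} (hc : 0 ≤ c) {r : ℝ} (hr : 0 < r)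
    {t : ℝ} (ht : 0 < t) :
    ∃ lam : ℝ, 0 < lam ∧ lam ≤ 1 ∧
      (max (lam * t - c) 0) ^ (p - 1) + r * lam * t - r * t = 0 ∧
      ∀ μ : ℝ, (max (μ * t - c) 0) ^ (p - 1) + r * μ * t - r * t = 0 → μ = lam := by
  set G : ℝ → ℝ := fun μ => (max (μ * t - c) 0) ^ (p - 1) + r * μ * t - r * t with hG
  have hmono : StrictMono G := by
    intro μ1 μ2 h
    have h1 : max (μ1 * t - c) 0 ≤ max (μ2 * t - c) 0 :=
      max_le_max (by nlinarith) le_rfl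
    have h2 : (max (μ1 * t - c) 0) ^ (p - 1) ≤ (max (μ2 * t - c) 0) ^ (p - 1) :=
      Real.rpow_le_rpow (le_max_right _ _) h1 (by linarith)
    have h3 : r * μ1 * t < r * μ2 * t := by nlinarith [mul_pos hr ht]
    simp only [hG]
    linarith
  have hcont : Continuous G := by
    have h1 : Continuous fun μ : ℝ => max (μ * t - c) 0 :=
      ((continuous_id.mul continuous_const).sub continuous_const).max continuous_const
    have h2 : Continuous fun μ : ℝ => (max (μ * t - c) 0) ^ (p - 1) :=
      h1.rpow_const fun x => Or.inr (by linarith)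
    have h3 : Continuous fun μ : ℝ => r * μ * t - r * t := by fun_prop
    have := h2.add h3
    convert this using 1
    ext μ
    simp only [hG, Pi.add_apply]
    ring
  have hG0 : G 0 < 0 := by
    have hm : max ((0:ℝ) * t - c) 0 = 0 := max_eq_right (by linarith)
    simp only [hG, hm, Real.zero_rpow (by linarith : p - 1 ≠ (0:ℝ))]
    nlinarith [mul_pos hr ht]
  have hG1 : 0 ≤ G 1 := by
    have hm : (0:ℝ) ≤ (max ((1:ℝ) * t - c) 0) ^ (p - 1) :=
      Real.rpow_nonneg (le_max_right _ _) _
    simp only [hG]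
    nlinarith
  obtain ⟨lam, hmem, hlam⟩ :=
    intermediate_value_Icc zero_le_one hcont.continuousOn ⟨hG0.le, hG1⟩
  have hlampos : 0 < lam := by
    rcases eq_or_lt_of_le hmem.1 with h | h
    · exfalso; rw [← h] at hlam; linarith
    · exact h
  exact ⟨lam, hlampos, hmem.2, hlam, fun μ hμ => hmono.injective (hμ.trans hlam.symm)⟩

private lemma strict_sq {d : ℕ} {r : ℝ} (hr : 0 < r) (qt : EuclideanSpace ℝ (Fin d)) :
    StrictConvexOn ℝ Set.univ
      (fun q : EuclideanSpace ℝ (Fin d) => r / 2 * ‖q - qt‖ ^ 2) := by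
  refine ⟨convex_univ, fun x _ y _ hxy a b ha hb hab => ?_⟩
  have hb' : b = 1 - a := by linarith
  subst hb'
  have h1 : a • x + (1 - a) • y - qt = a • (x - qt) + (1 - a) • (y - qt) := by
    have : a • (x - qt) + (1 - a) • (y - qt) = a • x + (1 - a) • y - (a + (1 - a)) • qt := by
      rw [add_smul, smul_sub, smul_sub]; abel
    rw [this]
    norm_num
  dsimp only
  rw [h1]
  set u := x - qt with hu
  set v := y - qt with hv
  have huv : u ≠ v := by
    intro h
    exact hxy (by simpa [hu, hv, sub_left_inj] using h)
  have e1 : ‖a • u + (1 - a) • v‖ ^ 2 =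
      a ^ 2 * ‖u‖ ^ 2 + 2 * (a * (1 - a)) * (inner ℝ u v : ℝ) + (1 - a) ^ 2 * ‖v‖ ^ 2 := by
    rw [norm_add_sq_real, norm_smul, norm_smul, real_inner_smul_left, real_inner_smul_right]
    simp only [Real.norm_eq_abs, abs_of_pos ha, abs_of_pos hb]
    ring
  have e2 : ‖u - v‖ ^ 2 = ‖u‖ ^ 2 - 2 * (inner ℝ u v : ℝ) + ‖v‖ ^ 2 := norm_sub_sq_real u v
  have hpos : 0 < ‖u - v‖ ^ 2 := by
    have h : u - v ≠ 0 := sub_ne_zero.mpr huv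
    exact pow_pos (norm_pos_iff.mpr h) 2
  have key : 0 < r / 2 * (a * (1 - a) * ‖u - v‖ ^ 2) :=
    mul_pos (by linarith : (0:ℝ) < r / 2)
      (by rw [mul_assoc] at *; exact mul_pos ha (mul_pos hb hpos))
  rw [e2] at key
  simp only [smul_eq_mul]
  nlinarith [e1, key]

private lemma conv_part {d : ℕ} {p : ℝ} (hp : 1 < p) {c : ℝ} (hc : 0 ≤ c) :
    ConvexOn ℝ Set.univ
      (fun q : EuclideanSpace ℝ (Fin d) => 1 / p * (max (‖q‖ - c) 0) ^ p) := by
  have hp0 : (0:ℝ) ≤ p := by linarith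
  -- scalar outer function is convex
  have houter : ConvexOn ℝ Set.univ (fun x : ℝ => (max (x - c) 0) ^ p) := by
    refine ⟨convex_univ, fun x _ y _ a b ha hb hab => ?_⟩
    simp only [smul_eq_mul]
    have hGx : (0:ℝ) ≤ max (x - c) 0 := le_max_right _ _
    have hGy : (0:ℝ) ≤ max (y - c) 0 := le_max_right _ _
    have h1 : max (a * x + b * y - c) 0 ≤ a * max (x - c) 0 + b * max (y - c) 0 := by
      apply max_le
      · have e : a * x + b * y - c = a * (x - c) + b * (y - c) := by
          linear_combination c * hab
        rw [e]
        exact add_le_add (mul_le_mul_of_nonneg_left (le_max_left _ _) ha)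
          (mul_le_mul_of_nonneg_left (le_max_left _ _) hb)
      · positivity
    have h2 := (convexOn_rpow hp.le).2 (mem_Ici.mpr hGx) (mem_Ici.mpr hGy) ha hb hab
    simp only [smul_eq_mul] at h2
    have h3 : (max (a * x + b * y - c) 0) ^ p ≤
        (a * max (x - c) 0 + b * max (y - c) 0) ^ p :=
      Real.rpow_le_rpow (le_max_right _ _) h1 hp0
    exact h3.trans h2
  have hcomp : ConvexOn ℝ Set.univ
      (fun q : EuclideanSpace ℝ (Fin d) => (max (‖q‖ - c) 0) ^ p) := by
    refine ⟨convex_univ, fun x _ y _ a b ha hb hab => ?_⟩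
    simp only [smul_eq_mul]
    have hn : ‖a • x + b • y‖ ≤ a * ‖x‖ + b * ‖y‖ := by
      calc ‖a • x + b • y‖ ≤ ‖a • x‖ + ‖b • y‖ := norm_add_le _ _
        _ = a * ‖x‖ + b * ‖y‖ := by
            rw [norm_smul, norm_smul]
            simp [Real.norm_eq_abs, abs_of_nonneg ha, abs_of_nonneg hb]
    have hstep : (max (‖a • x + b • y‖ - c) 0) ^ p ≤
        (max (a * ‖x‖ + b * ‖y‖ - c) 0) ^ p :=
      Real.rpow_le_rpow (le_max_right _ _) (max_le_max (by linarith) le_rfl) hp0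
    have h2 := houter.2 (mem_univ ‖x‖) (mem_univ ‖y‖) ha hb hab
    simp only [smul_eq_mul] at h2
    exact hstep.trans h2
  have hsm := hcomp.smul (show (0:ℝ) ≤ 1 / p by positivity)
  simpa [smul_eq_mul] using hsm

theorem stmt_8 {d : ℕ} (hd : 1 ≤ d) (p : ℝ) (hp : 1 < p)
    (c : ℝ) (hc : 0 ≤ c) (r : ℝ) (hr : 0 < r)
    (qt : EuclideanSpace ℝ (Fin d)) (hqt : qt ≠ 0)
    (φ : EuclideanSpace ℝ (Fin d) → ℝ)
    (hφ : ∀ q : EuclideanSpace ℝ (Fin d),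
      φ q = 1 / p * (max (‖q‖ - c) 0) ^ p + r / 2 * ‖q - qt‖ ^ 2) :
    StrictConvexOn ℝ Set.univ φ ∧
    ∃ qstar : EuclideanSpace ℝ (Fin d),
      (∀ q, φ qstar ≤ φ q) ∧
      (∀ q' : EuclideanSpace ℝ (Fin d), (∀ q, φ q' ≤ φ q) → q' = qstar) ∧
      ∃ lam : ℝ, qstar = lam • qt ∧ 0 ≤ lam ∧
        (max (lam * ‖qt‖ - c) 0) ^ (p - 1) + r * lam * ‖qt‖ - r * ‖qt‖ = 0 ∧
        (∀ μ : ℝ, 0 ≤ μ →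
          (max (μ * ‖qt‖ - c) 0) ^ (p - 1) + r * μ * ‖qt‖ - r * ‖qt‖ = 0 → μ = lam) ∧
        0 < lam ∧ lam ≤ 1 := by
  have ht : 0 < ‖qt‖ := norm_pos_iff.mpr hqt
  have hsc : StrictConvexOn ℝ Set.univ φ := by
    have h := (conv_part (d := d) hp hc).add_strictConvexOn (strict_sq hr qt)
    have hfe : φ = fun q : EuclideanSpace ℝ (Fin d) =>
        1 / p * (max (‖q‖ - c) 0) ^ p + r / 2 * ‖q - qt‖ ^ 2 := funext hφ
    rw [hfe]
    exact h
  obtain ⟨lam, hlampos, hlamle, hroot, huniq⟩ := root_exists hp hc hr ht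
  have hmin : ∀ q, φ (lam • qt) ≤ φ q := by
    intro q
    rw [hφ, hφ]
    have h1 : ‖lam • qt‖ = lam * ‖qt‖ := by
      rw [norm_smul, Real.norm_eq_abs, abs_of_nonneg hlampos.le]
    have h2 : ‖lam • qt - qt‖ ^ 2 = (lam * ‖qt‖ - ‖qt‖) ^ 2 := by
      have e : lam • qt - qt = (lam - 1) • qt := by rw [sub_smul, one_smul]
      rw [e, norm_smul, Real.norm_eq_abs, mul_pow, sq_abs]
      ring
    have h3 : (‖q‖ - ‖qt‖) ^ 2 ≤ ‖q - qt‖ ^ 2 := by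
      have e := norm_sub_sq_real q qt
      have hi := real_inner_le_norm q qt
      nlinarith [e, hi]
    rw [h1, h2]
    calc 1 / p * (max (lam * ‖qt‖ - c) 0) ^ p + r / 2 * (lam * ‖qt‖ - ‖qt‖) ^ 2
        ≤ 1 / p * (max (‖q‖ - c) 0) ^ p + r / 2 * (‖q‖ - ‖qt‖) ^ 2 :=
          one_dim_min hp hc hr ht hlampos.le hroot ‖q‖
      _ ≤ 1 / p * (max (‖q‖ - c) 0) ^ p + r / 2 * ‖q - qt‖ ^ 2 := by
          have : r / 2 * (‖q‖ - ‖qt‖) ^ 2 ≤ r / 2 * ‖q - qt‖ ^ 2 :=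
            mul_le_mul_of_nonneg_left h3 (by positivity)
          linarith
  refine ⟨hsc, lam • qt, hmin, ?_, lam, rfl, hlampos.le, hroot,
    fun μ _ hμ => huniq μ hμ, hlampos, hlamle⟩
  intro q' hq'
  by_contra hne
  have heq : φ q' = φ (lam • qt) := le_antisymm (hq' _) (hmin _)
  have hstrict := hsc.2 (mem_univ q') (mem_univ (lam • qt)) hne
    (by norm_num : (0:ℝ) < 1/2) (by norm_num : (0:ℝ) < 1/2) (by norm_num)
  rw [heq] at hstrict
  have := hmin ((1/2 : ℝ) • q' + (1/2 : ℝ) • (lam • qt))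
  simp only [smul_eq_mul] at hstrict
  linarith
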